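/- In the decoupling setting (see context), the following pole propagation holds. (i) If P ∈ ℂ ∖ {0} is a pole of h₁ and P ∉ ℒ₁⁻, then P/q is a pole of h₁. (ii) If P ∈ ℂ ∖ {0} is a pole of h₁ and P ∉ ℒ₁⁺, then q·P is a pole of h₁. (i') If P ∈ ℂ ∖ {0} is a pole of h₂ and P ∉ ℒ₂⁻, then P/q is a pole of h₂. (ii') If P ∈ ℂ ∖ {0} is a pole of h₂ and P ∉ ℒ₂⁺, then q·P is a pole of h₂. -/

import Mathlib

/-!
Statement 11 (pole propagation in the decoupling setting): for a solution (h₁, h₂) of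
the inhomogeneous decoupling equation γ₁h₁ + γ₂h₂ + ω = 0 with h₁^{ι₁} = h₁ and
h₂^{ι₂} = h₂, a pole P ≠ 0 of h₁ (resp. h₂) outside the critical set ℒ₁⁻/ℒ₁⁺
(resp. ℒ₂⁻/ℒ₂⁺) propagates to a pole at P/q, resp. q·P.
-/

noncomputable section

/-- `a` is a pole of the rational function `h`. -/
def IsPole (h : RatFunc ℂ) (a : ℂ) : Prop := h.denom.eval a = 0

/-- `a` is a zero of the rational function `h`. -/
def IsZero (h : RatFunc ℂ) (a : ℂ) : Prop := h.num.eval a = 0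

open Polynomial

local notation "φ" => algebraMap (Polynomial ℂ) (RatFunc ℂ)

lemma aux_aeval_X (p : Polynomial ℂ) : Polynomial.aeval RatFunc.X p = φ p := by
  have : (Polynomial.aeval RatFunc.X : Polynomial ℂ →ₐ[ℂ] RatFunc ℂ)
      = IsScalarTower.toAlgHom ℂ (Polynomial ℂ) (RatFunc ℂ) :=
    Polynomial.algHom_ext (by simp [RatFunc.algebraMap_X])
  rw [this]; rfl

lemma notPole_iff (h : RatFunc ℂ) (a : ℂ) :
    ¬ IsPole h a ↔ ∃ p r : Polynomial ℂ, r.eval a ≠ 0 ∧ h * φ r = φ p := by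
  constructor
  · intro hnp
    refine ⟨h.num, h.denom, hnp, ?_⟩
    rw [← eq_div_iff (RatFunc.algebraMap_ne_zero (RatFunc.denom_ne_zero h))]
    exact (RatFunc.num_div_denom h).symm
  · rintro ⟨p, r, hr, heq⟩ hpole
    have hmul : h * φ h.denom = φ h.num := by
      rw [← eq_div_iff (RatFunc.algebraMap_ne_zero (RatFunc.denom_ne_zero h))]
      exact (RatFunc.num_div_denom h).symm
    have hcross : h.num * r = p * h.denom := by
      apply RatFunc.algebraMap_injective ℂ
      push_cast [map_mul]
      calc φ h.num * φ r = (h * φ h.denom) * φ r := by rw [hmul]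
        _ = (h * φ r) * φ h.denom := by ring
        _ = φ p * φ h.denom := by rw [heq]
    have hdvd : h.denom ∣ r := by
      have h1 : h.denom ∣ h.num * r := ⟨p, by linear_combination hcross⟩
      exact ((RatFunc.isCoprime_num_denom h).symm).dvd_of_dvd_mul_left h1
    obtain ⟨t, ht⟩ := hdvd
    apply hr
    rw [ht, Polynomial.eval_mul, hpole, zero_mul]

lemma np_add {u v : RatFunc ℂ} {a : ℂ} (hu : ¬ IsPole u a) (hv : ¬ IsPole v a) :
    ¬ IsPole (u + v) a := by
  rw [notPole_iff] at hu hv ⊢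
  obtain ⟨p1, r1, hr1, he1⟩ := hu
  obtain ⟨p2, r2, hr2, he2⟩ := hv
  refine ⟨p1 * r2 + p2 * r1, r1 * r2, by simp [hr1, hr2], ?_⟩
  push_cast [map_mul, map_add]
  linear_combination (algebraMap (Polynomial ℂ) (RatFunc ℂ) r2) * he1 +
    (algebraMap (Polynomial ℂ) (RatFunc ℂ) r1) * he2

lemma np_mul {u v : RatFunc ℂ} {a : ℂ} (hu : ¬ IsPole u a) (hv : ¬ IsPole v a) :
    ¬ IsPole (u * v) a := by
  rw [notPole_iff] at hu hv ⊢
  obtain ⟨p1, r1, hr1, he1⟩ := hu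
  obtain ⟨p2, r2, hr2, he2⟩ := hv
  refine ⟨p1 * p2, r1 * r2, by simp [hr1, hr2], ?_⟩
  push_cast [map_mul]
  linear_combination (v * algebraMap (Polynomial ℂ) (RatFunc ℂ) r2) * he1 +
    (algebraMap (Polynomial ℂ) (RatFunc ℂ) p1) * he2

lemma np_neg {u : RatFunc ℂ} {a : ℂ} (hu : ¬ IsPole u a) : ¬ IsPole (-u) a := by
  rw [notPole_iff] at hu ⊢
  obtain ⟨p, r, hr, he⟩ := hu
  exact ⟨-p, r, hr, by push_cast [map_neg]; linear_combination -he⟩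

lemma np_C (ω : ℂ) (a : ℂ) : ¬ IsPole (RatFunc.C ω) a := by
  rw [notPole_iff]
  exact ⟨Polynomial.C ω, 1, by simp, by simp [RatFunc.algebraMap_C]⟩

lemma np_inv {g : RatFunc ℂ} {a : ℂ} (hg : g ≠ 0) (hz : ¬ IsZero g a) :
    ¬ IsPole g⁻¹ a := by
  rw [notPole_iff]
  refine ⟨g.denom, g.num, hz, ?_⟩
  have hmul : g * algebraMap (Polynomial ℂ) (RatFunc ℂ) g.denom
      = algebraMap (Polynomial ℂ) (RatFunc ℂ) g.num := by
    rw [← eq_div_iff (RatFunc.algebraMap_ne_zero (RatFunc.denom_ne_zero g))]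
    exact (RatFunc.num_div_denom g).symm
  apply mul_left_cancel₀ hg
  rw [← mul_assoc, mul_inv_cancel₀ hg, one_mul]
  exact hmul.symm

/-- The "reflected" polynomial for the substitution `X ↦ c/X`. -/
def reflC (c : ℂ) (N : ℕ) (p : Polynomial ℂ) : Polynomial ℂ :=
  ∑ i ∈ Finset.range (N + 1), Polynomial.monomial (N - i) (p.coeff i * c ^ i)

lemma reflC_spec (c : ℂ) (N : ℕ) (p : Polynomial ℂ) (hN : p.natDegree < N + 1) :
    algebraMap (Polynomial ℂ) (RatFunc ℂ) (reflC c N p)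
      = RatFunc.X ^ N * Polynomial.aeval (RatFunc.C c * RatFunc.X⁻¹) p := by
  rw [Polynomial.aeval_eq_sum_range' hN, Finset.mul_sum, reflC, map_sum]
  refine Finset.sum_congr rfl fun i hi => ?_
  rw [Finset.mem_range, Nat.lt_succ_iff] at hi
  rw [← Polynomial.C_mul_X_pow_eq_monomial, map_mul, map_pow, RatFunc.algebraMap_C,
    RatFunc.algebraMap_X, Algebra.smul_def, ← RatFunc.algebraMap_eq_C]
  have hX : (RatFunc.X : RatFunc ℂ) ≠ 0 := RatFunc.X_ne_zero
  rw [pow_sub₀ _ hX hi]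
  field_simp
  rw [map_mul, map_pow, div_pow, mul_div_assoc', eq_div_iff (pow_ne_zero _ hX)]
  ring

lemma reflC_eval (c : ℂ) (hc : c ≠ 0) (a : ℂ) (ha : a ≠ 0) (N : ℕ) (p : Polynomial ℂ)
    (hN : p.natDegree < N + 1) :
    (reflC c N p).eval (c / a) = c ^ N / a ^ N * p.eval a := by
  rw [Polynomial.eval_eq_sum_range' hN, reflC, Polynomial.eval_finset_sum, Finset.mul_sum]
  refine Finset.sum_congr rfl fun i hi => ?_
  rw [Finset.mem_range, Nat.lt_succ_iff] at hi
  rw [Polynomial.eval_monomial, div_pow, pow_sub₀ _ hc hi, pow_sub₀ _ ha hi]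
  field_simp

lemma notPole_subst {c : ℂ} (hc : c ≠ 0) (ι : RatFunc ℂ ≃ₐ[ℂ] RatFunc ℂ)
    (hι : ι RatFunc.X = RatFunc.C c * RatFunc.X⁻¹) (h : RatFunc ℂ) {a : ℂ} (ha : a ≠ 0)
    (hnp : ¬ IsPole h a) : ¬ IsPole (ι h) (c / a) := by
  obtain ⟨p, r, hr, heq⟩ := (notPole_iff h a).mp hnp
  set N := max p.natDegree r.natDegree with hNdef
  have hpN : p.natDegree < N + 1 := Nat.lt_succ_of_le (le_max_left _ _)
  have hrN : r.natDegree < N + 1 := Nat.lt_succ_of_le (le_max_right _ _)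
  have hiota : ∀ s : Polynomial ℂ, ι (algebraMap (Polynomial ℂ) (RatFunc ℂ) s)
      = Polynomial.aeval (RatFunc.C c * RatFunc.X⁻¹) s := by
    intro s
    rw [← aux_aeval_X s, ← Polynomial.aeval_algHom_apply ι RatFunc.X s, hι]
  have heq2 : ι h * Polynomial.aeval (RatFunc.C c * RatFunc.X⁻¹) r
      = Polynomial.aeval (RatFunc.C c * RatFunc.X⁻¹) p := by
    rw [← hiota, ← hiota, ← map_mul, heq]
  rw [notPole_iff]
  refine ⟨reflC c N p, reflC c N r, ?_, ?_⟩
  · rw [reflC_eval c hc a ha N r hrN]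
    exact mul_ne_zero (div_ne_zero (pow_ne_zero _ hc) (pow_ne_zero _ ha)) hr
  · rw [reflC_spec c N r hrN, reflC_spec c N p hpN]
    rw [← mul_assoc, mul_comm (ι h) (RatFunc.X ^ N), mul_assoc, heq2]

lemma pole_subst {c : ℂ} (hc : c ≠ 0) (ι : RatFunc ℂ ≃ₐ[ℂ] RatFunc ℂ)
    (hι : ι RatFunc.X = RatFunc.C c * RatFunc.X⁻¹) {h : RatFunc ℂ} (hfix : ι h = h)
    {a : ℂ} (ha : a ≠ 0) (hp : IsPole h a) : IsPole h (c / a) := by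
  by_contra hnp
  have h2 := notPole_subst hc ι hι h (div_ne_zero hc ha) hnp
  rw [hfix] at h2
  have : c / (c / a) = a := by field_simp
  rw [this] at h2
  exact h2 hp

lemma step {γ δ u v : RatFunc ℂ} {ω : ℂ} (hγ : γ ≠ 0) {b : ℂ}
    (hγz : ¬ IsZero γ b) (hδnp : ¬ IsPole δ b)
    (hrel : γ * u + δ * v + RatFunc.C ω = 0) (hu : IsPole u b) : IsPole v b := by
  by_contra hv
  have hueq : u = γ⁻¹ * (-(δ * v) - RatFunc.C ω) := by
    apply mul_left_cancel₀ hγ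
    rw [← mul_assoc, mul_inv_cancel₀ hγ, one_mul]
    linear_combination hrel
  have : ¬ IsPole u b := by
    rw [hueq, sub_eq_add_neg]
    exact np_mul (np_inv hγ hγz) (np_add (np_neg (np_mul hδnp hv)) (np_neg (np_C ω b)))
  exact this hu

lemma flip_div {q P A : ℂ} (hP : P ≠ 0) (hA : A ≠ 0) (h : q / P = A) : P = q / A := by
  field_simp at h ⊢
  linear_combination -h

lemma flip_mul {q P A : ℂ} (hq : q ≠ 0) (h : P / q = A) : P = q * A := by
  field_simp at h
  linear_combination h

lemma flip_inv {P A : ℂ} (hP : P ≠ 0) (h : 1 / P = A) : P = A⁻¹ := by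
  rw [← h, one_div, inv_inv]

theorem statement11 (q : ℂ) (hq : q ≠ 0)
    (ι₁ ι₂ : RatFunc ℂ ≃ₐ[ℂ] RatFunc ℂ)
    (hι₁ : ι₁ RatFunc.X = RatFunc.X⁻¹)
    (hι₂ : ι₂ RatFunc.X = RatFunc.C q * RatFunc.X⁻¹)
    (γ₁ γ₂ : RatFunc ℂ) (hγ₁ : γ₁ ≠ 0) (hγ₂ : γ₂ ≠ 0) (ω : ℂ)
    (P₁ P₂ P₃ P₄ : ℂ) (hP₁ : P₁ ≠ 0) (hP₂ : P₂ ≠ 0) (hP₃ : P₃ ≠ 0) (hP₄ : P₄ ≠ 0)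
    (hz₁ : ∀ a : ℂ, a ≠ 0 → IsZero γ₁ a → a = P₁ ∨ a = P₂)
    (hz₂ : ∀ a : ℂ, a ≠ 0 → IsZero γ₂ a → a = P₃ ∨ a = P₄)
    (hp₁ : ∀ a : ℂ, a ≠ 0 → ¬ IsPole γ₁ a)
    (hp₂ : ∀ a : ℂ, a ≠ 0 → ¬ IsPole γ₂ a)
    (h₁ h₂ : RatFunc ℂ)
    (hrel : γ₁ * h₁ + γ₂ * h₂ + RatFunc.C ω = 0)
    (hs₁ : ι₁ h₁ = h₁) (hs₂ : ι₂ h₂ = h₂) :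
    (∀ P : ℂ, P ≠ 0 → IsPole h₁ P →
        P ∉ ({P₁, P₂, q / P₃, q / P₄} : Set ℂ) → IsPole h₁ (P / q)) ∧
    (∀ P : ℂ, P ≠ 0 → IsPole h₁ P →
        P ∉ ({P₁⁻¹, P₂⁻¹, P₃ / q, P₄ / q} : Set ℂ) → IsPole h₁ (q * P)) ∧
    (∀ P : ℂ, P ≠ 0 → IsPole h₂ P →
        P ∉ ({q * P₁, q * P₂, q / P₃, q / P₄} : Set ℂ) → IsPole h₂ (P / q)) ∧
    (∀ P : ℂ, P ≠ 0 → IsPole h₂ P →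
        P ∉ ({P₁⁻¹, P₂⁻¹, P₃, P₄} : Set ℂ) → IsPole h₂ (q * P)) := by
  have hι₁' : ι₁ RatFunc.X = RatFunc.C (1 : ℂ) * RatFunc.X⁻¹ := by
    rw [hι₁, map_one, one_mul]
  have sym1 : ∀ a : ℂ, a ≠ 0 → IsPole h₁ a → IsPole h₁ (1 / a) := fun a ha hp =>
    pole_subst one_ne_zero ι₁ hι₁' hs₁ ha hp
  have sym2 : ∀ a : ℂ, a ≠ 0 → IsPole h₂ a → IsPole h₂ (q / a) := fun a ha hp =>
    pole_subst hq ι₂ hι₂ hs₂ ha hp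
  have hrel' : γ₂ * h₂ + γ₁ * h₁ + RatFunc.C ω = 0 := by linear_combination hrel
  have z1 : ∀ b : ℂ, b ≠ 0 → b ≠ P₁ → b ≠ P₂ → ¬ IsZero γ₁ b := fun b hb n1 n2 hz =>
    (hz₁ b hb hz).elim n1 n2
  have z2 : ∀ b : ℂ, b ≠ 0 → b ≠ P₃ → b ≠ P₄ → ¬ IsZero γ₂ b := fun b hb n1 n2 hz =>
    (hz₂ b hb hz).elim n1 n2
  have step12 : ∀ b : ℂ, b ≠ 0 → b ≠ P₁ → b ≠ P₂ → IsPole h₁ b → IsPole h₂ b :=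
    fun b hb n1 n2 hp => step hγ₁ (z1 b hb n1 n2) (hp₂ b hb) hrel hp
  have step21 : ∀ b : ℂ, b ≠ 0 → b ≠ P₃ → b ≠ P₄ → IsPole h₂ b → IsPole h₁ b :=
    fun b hb n1 n2 hp => step hγ₂ (z2 b hb n1 n2) (hp₁ b hb) hrel' hp
  have part1 : ∀ P : ℂ, P ≠ 0 → IsPole h₁ P → P ≠ P₁ → P ≠ P₂ → P ≠ q / P₃ →
      P ≠ q / P₄ → IsPole h₁ (P / q) := by
    intro P hP hpol n1 n2 n3 n4
    have hqP : q / P ≠ 0 := div_ne_zero hq hP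
    have h2P := step12 P hP n1 n2 hpol
    have h2qP := sym2 P hP h2P
    have h1qP := step21 (q / P) hqP (fun h => n3 (flip_div hP hP₃ h))
      (fun h => n4 (flip_div hP hP₄ h)) h2qP
    have h1fin := sym1 (q / P) hqP h1qP
    rwa [one_div_div] at h1fin
  have part3 : ∀ P : ℂ, P ≠ 0 → IsPole h₂ P → P ≠ q * P₁ → P ≠ q * P₂ → P ≠ q / P₃ →
      P ≠ q / P₄ → IsPole h₂ (P / q) := by
    intro P hP hpol n1 n2 n3 n4
    have hqP : q / P ≠ 0 := div_ne_zero hq hP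
    have h2qP := sym2 P hP hpol
    have h1qP := step21 (q / P) hqP (fun h => n3 (flip_div hP hP₃ h))
      (fun h => n4 (flip_div hP hP₄ h)) h2qP
    have h1Pq : IsPole h₁ (P / q) := by
      have := sym1 (q / P) hqP h1qP
      rwa [one_div_div] at this
    exact step12 (P / q) (div_ne_zero hP hq) (fun h => n1 (flip_mul hq h))
      (fun h => n2 (flip_mul hq h)) h1Pq
  refine ⟨?_, ?_, ?_, ?_⟩
  · intro P hP hpol hmem
    simp only [Set.mem_insert_iff, Set.mem_singleton_iff, not_or] at hmem
    exact part1 P hP hpol hmem.1 hmem.2.1 hmem.2.2.1 hmem.2.2.2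
  · intro P hP hpol hmem
    simp only [Set.mem_insert_iff, Set.mem_singleton_iff, not_or] at hmem
    obtain ⟨n1, n2, n3, n4⟩ := hmem
    have hPi : (1 : ℂ) / P ≠ 0 := div_ne_zero one_ne_zero hP
    have h1inv := sym1 P hP hpol
    have hpp := part1 (1 / P) hPi h1inv (fun h => n1 (flip_inv hP h))
      (fun h => n2 (flip_inv hP h))
      (fun h => n3 (by rw [flip_inv hP h, inv_div]))
      (fun h => n4 (by rw [flip_inv hP h, inv_div]))
    have hfin := sym1 ((1 / P) / q) (div_ne_zero hPi hq) hpp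
    rwa [div_div, one_div_one_div, mul_comm] at hfin
  · intro P hP hpol hmem
    simp only [Set.mem_insert_iff, Set.mem_singleton_iff, not_or] at hmem
    exact part3 P hP hpol hmem.1 hmem.2.1 hmem.2.2.1 hmem.2.2.2
  · intro P hP hpol hmem
    simp only [Set.mem_insert_iff, Set.mem_singleton_iff, not_or] at hmem
    obtain ⟨n1, n2, n3, n4⟩ := hmem
    have h1P := step21 P hP n3 n4 hpol
    have h1inv := sym1 P hP h1P
    have hPi : (1 : ℂ) / P ≠ 0 := div_ne_zero one_ne_zero hP
    have h2inv := step12 (1 / P) hPi (fun h => n1 (flip_inv hP h))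
      (fun h => n2 (flip_inv hP h)) h1inv
    have h2fin := sym2 (1 / P) hPi h2inv
    rwa [one_div, div_eq_mul_inv, inv_inv] at h2fin
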